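/- For every m ≥ 0 and every x ∈ ℝ, ∏_{k=1}^{m}(x + 2cos(2πk/(2m+1)) + 2) = Σ_{k=0}^{m} C(m+k, m-k) x^k, where C(a,b) denotes the binomial coefficient. -/

import Mathlib

open Finset
open Finset Polynomial

lemma pair_eq (m : ℕ) (i : ℕ) (him : i < m) (t : ℝ) :
    ((t:ℂ) + Complex.exp (2 * Real.pi * Complex.I / ((2*m+1:ℕ):ℂ)) ^ (i+1)) *
    ((t:ℂ) + Complex.exp (2 * Real.pi * Complex.I / ((2*m+1:ℕ):ℂ)) ^ (m + (m-1-i) + 1)) =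
    ((t^2 + 2 * Real.cos (2 * Real.pi * (i+1) / (2*m+1)) * t + 1 : ℝ) : ℂ) := by
  set n : ℕ := 2*m+1 with hndef
  have hn0 : (n:ℂ) ≠ 0 := by
    exact Nat.cast_ne_zero.mpr (by omega : n ≠ 0)
  set θ : ℝ := 2 * Real.pi * (i+1) / n with hθdef
  have hθc : ((θ:ℂ)) = 2 * Real.pi * (i+1) / n := by
    rw [hθdef]; push_cast; ring
  have A1 : Complex.exp (2 * Real.pi * Complex.I / (n:ℂ)) ^ (i+1)
      = Complex.exp ((θ:ℂ) * Complex.I) := by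
    rw [← Complex.exp_nat_mul, hθc]
    congr 1
    push_cast
    field_simp
  have A2 : Complex.exp (2 * Real.pi * Complex.I / (n:ℂ)) ^ (m + (m-1-i) + 1)
      = Complex.exp (-((θ:ℂ) * Complex.I)) := by
    rw [← Complex.exp_nat_mul]
    have h1 : ((m + (m-1-i) + 1 : ℕ) : ℂ) = (n:ℂ) - (i+1) := by
      have : (m + (m-1-i) + 1 : ℕ) = n - (i+1) := by simp only [hndef]; omega
      rw [this]
      push_cast [Nat.cast_sub (by omega : i+1 ≤ n)]
      ring
    rw [h1]
    have : ((n:ℂ) - (i+1)) * (2 * Real.pi * Complex.I / (n:ℂ))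
        = 2 * Real.pi * Complex.I + -((θ:ℂ) * Complex.I) := by
      rw [hθc]
      field_simp
      ring
    rw [this, Complex.exp_add, Complex.exp_two_pi_mul_I, one_mul]
  rw [A1, A2]
  have hsum : Complex.exp ((θ:ℂ) * Complex.I) + Complex.exp (-((θ:ℂ) * Complex.I))
      = 2 * Complex.cos (θ:ℂ) := by
    rw [Complex.cos]
    ring_nf
  have hprod : Complex.exp ((θ:ℂ) * Complex.I) * Complex.exp (-((θ:ℂ) * Complex.I)) = 1 := by
    rw [← Complex.exp_add]; simp
  have expand : ((t:ℂ) + Complex.exp ((θ:ℂ) * Complex.I)) * ((t:ℂ) + Complex.exp (-((θ:ℂ) * Complex.I)))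
      = (t:ℂ)^2 + (Complex.exp ((θ:ℂ) * Complex.I) + Complex.exp (-((θ:ℂ) * Complex.I))) * t
        + Complex.exp ((θ:ℂ) * Complex.I) * Complex.exp (-((θ:ℂ) * Complex.I)) := by ring
  rw [expand, hsum, hprod, ← Complex.ofReal_cos]
  push_cast
  rw [hθdef]
  push_cast
  rw [hndef]; push_cast; ring

lemma lemA (m : ℕ) (t : ℝ) :
    (t + 1) * ∏ k ∈ Finset.Icc 1 m, (t^2 + 2 * Real.cos (2 * Real.pi * k / (2 * m + 1)) * t + 1)
      = t ^ (2*m+1) + 1 := by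
  have hn : (2*m+1 : ℕ) ≠ 0 := by omega
  have hζ : IsPrimitiveRoot (Complex.exp (2 * Real.pi * Complex.I / ((2*m+1:ℕ):ℂ))) (2*m+1) :=
    Complex.isPrimitiveRoot_exp (2*m+1) hn
  have e : (-1 : ℂ) ^ (2*m+1) = -1 := Odd.neg_one_pow ⟨m, by omega⟩
  have h := congrArg (Polynomial.eval (t:ℂ)) (X_pow_sub_C_eq_prod hζ (by omega) e)
  simp only [Polynomial.eval_sub, Polynomial.eval_pow, Polynomial.eval_X, Polynomial.eval_C,
    Polynomial.eval_prod, mul_neg, mul_one, Polynomial.eval_add, sub_neg_eq_add] at h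
  -- h : (t:ℂ)^(2m+1) + 1 = ∏ i ∈ range (2m+1), ((t:ℂ) + ζ^i * -1)... check shape
  set ζ : ℂ := Complex.exp (2 * Real.pi * Complex.I / ((2*m+1:ℕ):ℂ)) with hζdef
  have h' : (t:ℂ)^(2*m+1) + 1 = ∏ i ∈ Finset.range (2*m+1), ((t:ℂ) + ζ^i) := by
    rw [h]
  rw [Finset.prod_range_succ'] at h'
  -- h' : ... = (∏ i ∈ range (2m), (t + ζ^(i+1))) * (t + ζ^0)
  have h2 : ∏ i ∈ Finset.range (2*m), ((t:ℂ) + ζ^(i+1))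
      = ∏ i ∈ Finset.range m, (((t:ℂ) + ζ^(i+1)) * ((t:ℂ) + ζ^(m+(m-1-i)+1))) := by
    rw [show 2*m = m + m by ring, Finset.prod_range_add, Finset.prod_mul_distrib]
    congr 1
    exact (Finset.prod_range_reflect (fun j => ((t:ℂ) + ζ^(m+j+1))) m).symm
  have h3 : ∏ i ∈ Finset.range m, (((t:ℂ) + ζ^(i+1)) * ((t:ℂ) + ζ^(m+(m-1-i)+1)))
      = ((∏ i ∈ Finset.range m, (t^2 + 2 * Real.cos (2 * Real.pi * (i+1) / (2*m+1)) * t + 1) : ℝ) : ℂ) := by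
    push_cast
    apply Finset.prod_congr rfl
    intro i hi
    rw [hζdef, pair_eq m i (Finset.mem_range.mp hi) t]
    push_cast
    ring
  have h4 : ∏ i ∈ Finset.range m, (t^2 + 2 * Real.cos (2 * Real.pi * (i+1) / (2*m+1)) * t + 1)
      = ∏ k ∈ Finset.Icc 1 m, (t^2 + 2 * Real.cos (2 * Real.pi * k / (2 * m + 1)) * t + 1) := by
    rw [← Finset.Ico_add_one_right_eq_Icc, Finset.prod_Ico_eq_prod_range]
    try simp only [Nat.add_sub_cancel]
    apply Finset.prod_congr rfl
    intro i _
    push_cast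
    ring_nf
  rw [h2, h3, h4] at h'
  have : ((t ^ (2*m+1) + 1 : ℝ) : ℂ) = (((∏ k ∈ Finset.Icc 1 m, (t^2 + 2 * Real.cos (2 * Real.pi * k / (2 * m + 1)) * t + 1)) * (t + 1) : ℝ) : ℂ) := by
    push_cast
    rw [h']
    push_cast
    ring
  have := Complex.ofReal_injective this
  linarith [this]


lemma pascal4 (n j : ℕ) : Nat.choose (n+4) (j+2) + Nat.choose (n+2) j
    = Nat.choose (n+2) (j+2) + 2 * Nat.choose (n+3) (j+1) := by
  simp only [Nat.choose_succ_succ]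
  ring

lemma P_rec (m : ℕ) (x : ℝ) :
    ∑ k ∈ Finset.range (m+3), (Nat.choose (m+2+k) (m+2-k) : ℝ) * x^k
      = (x+2) * ∑ k ∈ Finset.range (m+2), (Nat.choose (m+1+k) (m+1-k) : ℝ) * x^k
        - ∑ k ∈ Finset.range (m+1), (Nat.choose (m+k) (m-k) : ℝ) * x^k := by
  have key : ∀ k < m, (Nat.choose (m+2+(k+1)) (m+2-(k+1)) : ℝ) + Nat.choose (m+(k+1)) (m-(k+1))
      = Nat.choose (m+1+k) (m+1-k) + 2 * Nat.choose (m+1+(k+1)) (m+1-(k+1)) := by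
    intro k hk
    obtain ⟨j, rfl⟩ : ∃ j, m = k+j+1 := ⟨m-k-1, by omega⟩
    have e1 : k+j+1+2+(k+1) = 2*k+j+4 := by omega
    have e2 : k+j+1+2-(k+1) = j+2 := by omega
    have e3 : k+j+1+(k+1) = 2*k+j+2 := by omega
    have e4 : k+j+1-(k+1) = j := by omega
    have e5 : k+j+1+1+k = 2*k+j+2 := by omega
    have e6 : k+j+1+1-k = j+2 := by omega
    have e7 : k+j+1+1+(k+1) = 2*k+j+3 := by omega
    have e8 : k+j+1+1-(k+1) = j+1 := by omega
    rw [e1, e2, e3, e4, e5, e6, e7, e8]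
    exact_mod_cast congrArg (Nat.cast : ℕ → ℝ) (pascal4 (2*k+j) j)
  have hmid : (∑ k ∈ Finset.range m, (Nat.choose (m+2+(k+1)) (m+2-(k+1)) : ℝ) * x^(k+1))
      + ∑ k ∈ Finset.range m, (Nat.choose (m+(k+1)) (m-(k+1)) : ℝ) * x^(k+1)
      = (∑ k ∈ Finset.range m, (Nat.choose (m+1+k) (m+1-k) : ℝ) * x^(k+1))
      + ∑ k ∈ Finset.range m, 2 * (Nat.choose (m+1+(k+1)) (m+1-(k+1)) : ℝ) * x^(k+1) := by
    rw [← Finset.sum_add_distrib, ← Finset.sum_add_distrib]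
    refine Finset.sum_congr rfl fun k hk => ?_
    have h := key k (Finset.mem_range.mp hk)
    linear_combination x^(k+1) * h
  have hA : ∑ k ∈ Finset.range (m+3), (Nat.choose (m+2+k) (m+2-k) : ℝ) * x^k
      = (∑ k ∈ Finset.range m, (Nat.choose (m+2+(k+1)) (m+2-(k+1)) : ℝ) * x^(k+1))
        + (Nat.choose (m+2+0) (m+2-0) : ℝ) * x^0
        + (Nat.choose (m+2+(m+1)) (m+2-(m+1)) : ℝ) * x^(m+1)
        + (Nat.choose (m+2+(m+2)) (m+2-(m+2)) : ℝ) * x^(m+2) := by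
    rw [show m+3 = (m+1)+1+1 by omega, Finset.sum_range_succ, Finset.sum_range_succ,
      Finset.sum_range_succ']
  have hD : ∑ k ∈ Finset.range (m+1), (Nat.choose (m+k) (m-k) : ℝ) * x^k
      = (∑ k ∈ Finset.range m, (Nat.choose (m+(k+1)) (m-(k+1)) : ℝ) * x^(k+1))
        + (Nat.choose (m+0) (m-0) : ℝ) * x^0 := by
    rw [Finset.sum_range_succ']
  have hB1 : ∑ k ∈ Finset.range (m+2), (Nat.choose (m+1+k) (m+1-k) : ℝ) * x^(k+1)
      = (∑ k ∈ Finset.range m, (Nat.choose (m+1+k) (m+1-k) : ℝ) * x^(k+1))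
        + (Nat.choose (m+1+m) (m+1-m) : ℝ) * x^(m+1)
        + (Nat.choose (m+1+(m+1)) (m+1-(m+1)) : ℝ) * x^(m+2) := by
    rw [show m+2 = m+1+1 by omega, Finset.sum_range_succ, Finset.sum_range_succ]
  have hB2 : ∑ k ∈ Finset.range (m+2), (Nat.choose (m+1+k) (m+1-k) : ℝ) * x^k
      = (∑ k ∈ Finset.range m, (Nat.choose (m+1+(k+1)) (m+1-(k+1)) : ℝ) * x^(k+1))
        + (Nat.choose (m+1+0) (m+1-0) : ℝ) * x^0
        + (Nat.choose (m+1+(m+1)) (m+1-(m+1)) : ℝ) * x^(m+1) := by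
    rw [show m+2 = (m+1)+1 by omega, Finset.sum_range_succ, Finset.sum_range_succ']
  have expand : (x+2) * ∑ k ∈ Finset.range (m+2), (Nat.choose (m+1+k) (m+1-k) : ℝ) * x^k
      = (∑ k ∈ Finset.range (m+2), (Nat.choose (m+1+k) (m+1-k) : ℝ) * x^(k+1))
        + 2 * ∑ k ∈ Finset.range (m+2), (Nat.choose (m+1+k) (m+1-k) : ℝ) * x^k := by
    rw [Finset.mul_sum, Finset.mul_sum, ← Finset.sum_add_distrib]
    refine Finset.sum_congr rfl fun k hk => by ring
  have c1 : (Nat.choose (m+2+0) (m+2-0) : ℝ) = 1 := by simp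
  have c2 : (Nat.choose (m+0) (m-0) : ℝ) = 1 := by simp
  have c3 : (Nat.choose (m+1+0) (m+1-0) : ℝ) = 1 := by simp
  have c4 : (Nat.choose (m+2+(m+2)) (m+2-(m+2)) : ℝ) = 1 := by
    rw [show m+2-(m+2) = 0 by omega]; simp
  have c5 : (Nat.choose (m+1+(m+1)) (m+1-(m+1)) : ℝ) = 1 := by
    rw [show m+1-(m+1) = 0 by omega]; simp
  have c6 : (Nat.choose (m+2+(m+1)) (m+2-(m+1)) : ℝ) = (2*m+3 : ℝ) := by
    rw [show m+2-(m+1) = 1 by omega, Nat.choose_one_right]; push_cast; ring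
  have c7 : (Nat.choose (m+1+m) (m+1-m) : ℝ) = (2*m+1 : ℝ) := by
    rw [show m+1-m = 1 by omega, Nat.choose_one_right]; push_cast; ring
  have hs : ∑ k ∈ Finset.range m, 2 * (Nat.choose (m+1+(k+1)) (m+1-(k+1)) : ℝ) * x^(k+1)
      = 2 * ∑ k ∈ Finset.range m, (Nat.choose (m+1+(k+1)) (m+1-(k+1)) : ℝ) * x^(k+1) := by
    rw [Finset.mul_sum]
    exact Finset.sum_congr rfl fun k hk => by ring
  rw [hA, hD, expand, hB1, hB2, c1, c2, c3, c4, c5, c6, c7]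
  linarith [hmid, hs]

lemma lemB (m : ℕ) (t : ℝ) (ht : 1 < t) :
    (t+1) * (t^m * ∑ k ∈ Finset.range (m+1),
        (Nat.choose (m+k) (m-k) : ℝ) * ((t-1)^2/t)^k) = t^(2*m+1) + 1 := by
  have ht0 : t ≠ 0 := by linarith
  induction m using Nat.twoStepInduction with
  | zero => simp
  | one =>
    simp [Finset.sum_range_succ]
    field_simp
    ring
  | more m ih1 ih2 =>
    have hx : t * ((t-1)^2/t + 2) = t^2 + 1 := by field_simp; ring
    rw [P_rec m ((t-1)^2/t)]
    linear_combination (t^2+1) * ih2 - t^2 * ih1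
      + ((t+1) * t^(m+1) * ∑ k ∈ Finset.range (m+2),
          (Nat.choose (m+1+k) (m+1-k) : ℝ) * ((t-1)^2/t)^k) * hx

open Finset Polynomial in
/-- Explicit formula for `H_m^{(1)}`:
`∏_{k=1}^m (x + 2cos(2πk/(2m+1)) + 2) = Σ_{k=0}^m C(m+k, m-k) x^k`. -/
theorem H1_coeff (m : ℕ) (x : ℝ) :
    ∏ k ∈ Finset.Icc 1 m, (x + 2 * Real.cos (2 * Real.pi * k / (2 * m + 1)) + 2) =
      ∑ k ∈ Finset.range (m + 1), (Nat.choose (m + k) (m - k) : ℝ) * x ^ k := by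
  have keyid : ∀ t : ℝ, 1 < t →
      ∏ k ∈ Finset.Icc 1 m, ((t-1)^2/t + 2 * Real.cos (2 * Real.pi * k / (2 * m + 1)) + 2) =
      ∑ k ∈ Finset.range (m + 1), (Nat.choose (m + k) (m - k) : ℝ) * ((t-1)^2/t) ^ k := by
    intro t ht
    have ht0 : (0:ℝ) < t := by linarith
    have hprod : (∏ k ∈ Finset.Icc 1 m,
        ((t-1)^2/t + 2 * Real.cos (2 * Real.pi * k / (2 * m + 1)) + 2)) * t^m
        = ∏ k ∈ Finset.Icc 1 m,
          (t^2 + 2 * Real.cos (2 * Real.pi * k / (2 * m + 1)) * t + 1) := by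
      have hcard : (Finset.Icc 1 m).card = m := by simp
      rw [show t^m = ∏ _k ∈ Finset.Icc 1 m, t by rw [Finset.prod_const, hcard],
        ← Finset.prod_mul_distrib]
      refine Finset.prod_congr rfl fun k _ => ?_
      field_simp
      ring
    have hA := lemA m t
    have hB := lemB m t ht
    have hne : (t+1) * t^m ≠ 0 := by positivity
    apply mul_right_cancel₀ hne
    have : (∏ k ∈ Finset.Icc 1 m,
        ((t-1)^2/t + 2 * Real.cos (2 * Real.pi * k / (2 * m + 1)) + 2)) * ((t+1) * t^m)
        = (t+1) * ((∏ k ∈ Finset.Icc 1 m,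
          ((t-1)^2/t + 2 * Real.cos (2 * Real.pi * k / (2 * m + 1)) + 2)) * t^m) := by ring
    rw [this, hprod, hA]
    linarith [hB]
  set p : Polynomial ℝ :=
    (∏ k ∈ Finset.Icc 1 m, (X + C (2 * Real.cos (2 * Real.pi * k / (2 * m + 1)) + 2)))
      - ∑ k ∈ Finset.range (m + 1), C ((Nat.choose (m + k) (m - k) : ℝ)) * X ^ k with hp
  have heval : ∀ y : ℝ, p.eval y =
      (∏ k ∈ Finset.Icc 1 m, (y + 2 * Real.cos (2 * Real.pi * k / (2 * m + 1)) + 2))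
      - ∑ k ∈ Finset.range (m + 1), (Nat.choose (m + k) (m - k) : ℝ) * y ^ k := by
    intro y
    rw [hp]
    simp only [Polynomial.eval_sub, Polynomial.eval_prod, Polynomial.eval_finset_sum,
      Polynomial.eval_add, Polynomial.eval_mul, Polynomial.eval_pow, Polynomial.eval_X,
      Polynomial.eval_C]
    congr 1
    exact Finset.prod_congr rfl fun k _ => by ring
  have hroot : ∀ n : ℕ, p.IsRoot (((n:ℝ)+1)^2/((n:ℝ)+2)) := by
    intro n
    have ht : (1:ℝ) < (n:ℝ)+2 := by
      have : (0:ℝ) ≤ (n:ℝ) := Nat.cast_nonneg n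
      linarith
    have hx : ((n:ℝ)+1)^2/((n:ℝ)+2) = (((n:ℝ)+2)-1)^2/((n:ℝ)+2) := by
      rw [show ((n:ℝ)+2-1) = (n:ℝ)+1 by ring]
    rw [Polynomial.IsRoot, heval, hx, keyid ((n:ℝ)+2) ht, sub_self]
  have hmono : StrictMono (fun n : ℕ => ((n:ℝ)+1)^2/((n:ℝ)+2)) := by
    apply strictMono_nat_of_lt_succ
    intro n
    push_cast
    rw [div_lt_div_iff₀ (by positivity) (by positivity)]
    nlinarith [sq_nonneg ((n:ℝ)+1), Nat.cast_nonneg (α := ℝ) n]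
  have hp0 : p = 0 := by
    apply Polynomial.eq_zero_of_infinite_isRoot
    apply Set.infinite_of_injective_forall_mem (f := fun n : ℕ => ((n:ℝ)+1)^2/((n:ℝ)+2))
      hmono.injective
    intro n
    exact hroot n
  have := heval x
  rw [hp0] at this
  simp only [Polynomial.eval_zero] at this
  linarith
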